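/- Let X and Y be random fields indexed by ℤ^d on a common probability space, with Y consisting of mutually independent random variables and Y independent of X. Suppose X satisfies the (BL,θ)-dependence property: for all disjoint finite I, J ⊂ ℤ^d and all bounded Lipschitz f: ℝ^|I| → ℝ, g: ℝ^|J| → ℝ, |cov(f(X_I), g(X_J))| ≤ Lip(f)·Lip(g)·(|I| ∧ |J|)·θ_r with r = dist(I,J). Then for all such I, J, f, g, |cov(f(X_I + Y_I), g(X_J + Y_J))| ≤ Lip(f)·Lip(g)·(|I| ∧ |J|)·θ_r, i.e. the field X + Y is (BL,θ)-dependent with the same sequence θ. -/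

import Mathlib

open MeasureTheory ProbabilityTheory Finset

/-- Lemma 3.9 of Bulinski–Shashkin: adding an independent field `Y` of mutually
independent random variables to a `(BL,θ)`-dependent field `X` preserves the
`(BL,θ)`-dependence property with the same sequence `θ`. -/
theorem stmt10 {Ω : Type*} [MeasurableSpace Ω] (P : Measure Ω) [IsProbabilityMeasure P]
    (d : ℕ) (X Y : (Fin d → ℤ) → Ω → ℝ)
    (hXm : ∀ i, Measurable (X i)) (hYm : ∀ i, Measurable (Y i))
    (hYindep : iIndepFun Y P)
    (hXYindep : IndepFun (fun ω (i : Fin d → ℤ) => X i ω) (fun ω (i : Fin d → ℤ) => Y i ω) P)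
    (θ : ℕ → ℝ)
    (hBL : ∀ (I J : Finset (Fin d → ℤ)) (hI : I.Nonempty) (hJ : J.Nonempty),
      Disjoint I J →
      ∀ (f g : ((Fin d → ℤ) → ℝ) → ℝ) (Lf Lg : ℝ), Measurable f → Measurable g →
      (∃ Mf, ∀ x, |f x| ≤ Mf) → (∃ Mg, ∀ x, |g x| ≤ Mg) →
      (∀ x x', |f x - f x'| ≤ Lf * ∑ i ∈ I, |x i - x' i|) →
      (∀ x x', |g x - g x'| ≤ Lg * ∑ j ∈ J, |x j - x' j|) →
      |(∫ ω, f (fun i => X i ω) * g (fun i => X i ω) ∂P) -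
          (∫ ω, f (fun i => X i ω) ∂P) * ∫ ω, g (fun i => X i ω) ∂P| ≤
        Lf * Lg * (min I.card J.card) *
          θ ((I ×ˢ J).inf' (hI.product hJ) fun p =>
              Finset.univ.sup fun s => (p.1 s - p.2 s).natAbs)) :
    ∀ (I J : Finset (Fin d → ℤ)) (hI : I.Nonempty) (hJ : J.Nonempty),
      Disjoint I J →
      ∀ (f g : ((Fin d → ℤ) → ℝ) → ℝ) (Lf Lg : ℝ), Measurable f → Measurable g →
      (∃ Mf, ∀ x, |f x| ≤ Mf) → (∃ Mg, ∀ x, |g x| ≤ Mg) →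
      (∀ x x', |f x - f x'| ≤ Lf * ∑ i ∈ I, |x i - x' i|) →
      (∀ x x', |g x - g x'| ≤ Lg * ∑ j ∈ J, |x j - x' j|) →
      |(∫ ω, f (fun i => X i ω + Y i ω) * g (fun i => X i ω + Y i ω) ∂P) -
          (∫ ω, f (fun i => X i ω + Y i ω) ∂P) * ∫ ω, g (fun i => X i ω + Y i ω) ∂P| ≤
        Lf * Lg * (min I.card J.card) *
          θ ((I ×ˢ J).inf' (hI.product hJ) fun p =>
              Finset.univ.sup fun s => (p.1 s - p.2 s).natAbs) := by
  intro I J hI hJ hIJ f g Lf Lg hfm hgm hfb hgb hfL hgL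
  obtain ⟨Mf, hMf⟩ := hfb
  obtain ⟨Mg, hMg⟩ := hgb
  have hMf0 : 0 ≤ Mf := le_trans (abs_nonneg _) (hMf 0)
  have hMg0 : 0 ≤ Mg := le_trans (abs_nonneg _) (hMg 0)
  have hE : True := trivial
  set XX : Ω → ((Fin d → ℤ) → ℝ) := fun ω i => X i ω with hXX
  set YY : Ω → ((Fin d → ℤ) → ℝ) := fun ω i => Y i ω with hYY
  have hXXm : Measurable XX := measurable_pi_lambda _ hXm
  have hYYm : Measurable YY := measurable_pi_lambda _ hYm
  set μ : Measure ((Fin d → ℤ) → ℝ) := P.map XX with hμ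
  set ν : Measure ((Fin d → ℤ) → ℝ) := P.map YY with hν
  haveI : IsProbabilityMeasure μ := Measure.isProbabilityMeasure_map hXXm.aemeasurable
  haveI : IsProbabilityMeasure ν := Measure.isProbabilityMeasure_map hYYm.aemeasurable
  have hjoint : P.map (fun ω => (XX ω, YY ω)) = μ.prod ν :=
    (indepFun_iff_map_prod_eq_prod_map_map hXXm.aemeasurable hYYm.aemeasurable).mp hXYindep
  have haddm : Measurable fun p : ((Fin d → ℤ) → ℝ) × ((Fin d → ℤ) → ℝ) => p.1 + p.2 := measurable_fst.add measurable_snd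
  -- the target bound
  set C : ℝ := Lf * Lg * (min I.card J.card) *
      θ ((I ×ˢ J).inf' (hI.product hJ) fun p =>
          Finset.univ.sup fun s => (p.1 s - p.2 s).natAbs) with hC
  -- conditional expectations given Y = y
  set Af : ((Fin d → ℤ) → ℝ) → ℝ := fun y => ∫ x, f (x + y) ∂μ with hAf
  set Ag : ((Fin d → ℤ) → ℝ) → ℝ := fun y => ∫ x, g (x + y) ∂μ with hAg
  have hfpm : Measurable fun p : ((Fin d → ℤ) → ℝ) × ((Fin d → ℤ) → ℝ) => f (p.1 + p.2) := by exact hfm.comp haddm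
  have hgpm : Measurable fun p : ((Fin d → ℤ) → ℝ) × ((Fin d → ℤ) → ℝ) => g (p.1 + p.2) := by exact hgm.comp haddm
  have hAfm : StronglyMeasurable Af :=
    hfpm.stronglyMeasurable.integral_prod_left'
  have hAgm : StronglyMeasurable Ag :=
    hgpm.stronglyMeasurable.integral_prod_left'
  have hAfb : ∀ y, |Af y| ≤ Mf := by
    intro y
    have := norm_integral_le_of_norm_le_const (μ := μ) (f := fun x => f (x + y)) (C := Mf)
      (ae_of_all _ fun x => by simpa [Real.norm_eq_abs] using hMf (x + y))
    simpa [Real.norm_eq_abs] using this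
  have hAgb : ∀ y, |Ag y| ≤ Mg := by
    intro y
    have := norm_integral_le_of_norm_le_const (μ := μ) (f := fun x => g (x + y)) (C := Mg)
      (ae_of_all _ fun x => by simpa [Real.norm_eq_abs] using hMg (x + y))
    simpa [Real.norm_eq_abs] using this
  -- a generic integrability helper
  have hInt : ∀ {α : Type _} [MeasurableSpace α] (m : Measure α) [IsProbabilityMeasure m]
      (h : α → ℝ) (M : ℝ), AEStronglyMeasurable h m → (∀ x, |h x| ≤ M) → Integrable h m := by
    intro α _ m _ h M hm hb
    exact (integrable_const M).mono' hm (ae_of_all _ fun x => by simpa using hb x)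
  -- rewrite expectations as double integrals via independence + Fubini
  have key : ∀ (h : ((Fin d → ℤ) → ℝ) → ℝ) (M : ℝ), Measurable h → (∀ x, |h x| ≤ M) →
      ∫ ω, h (XX ω + YY ω) ∂P = ∫ y, ∫ x, h (x + y) ∂μ ∂ν := by
    intro h M hm hb
    have hpm : Measurable fun p : ((Fin d → ℤ) → ℝ) × ((Fin d → ℤ) → ℝ) => h (p.1 + p.2) := by exact hm.comp haddm
    have h1 : ∫ ω, h (XX ω + YY ω) ∂P = ∫ p, h (p.1 + p.2) ∂(μ.prod ν) := by
      rw [← hjoint]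
      exact (integral_map (hXXm.prodMk hYYm).aemeasurable hpm.aestronglyMeasurable).symm
    rw [h1]
    exact integral_prod_symm _
      (hInt (μ.prod ν) _ M hpm.aestronglyMeasurable (fun p => hb _))
  have E1 : ∫ ω, f (fun i => X i ω + Y i ω) * g (fun i => X i ω + Y i ω) ∂P
      = ∫ y, ∫ x, f (x + y) * g (x + y) ∂μ ∂ν := by
    exact key (fun x => f x * g x) (Mf * Mg) (hfm.mul hgm)
      (fun x => by
        rw [abs_mul]
        exact mul_le_mul (hMf x) (hMg x) (abs_nonneg _) hMf0)
  have E2 : ∫ ω, f (fun i => X i ω + Y i ω) ∂P = ∫ y, Af y ∂ν := key f Mf hfm hMf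
  have E3 : ∫ ω, g (fun i => X i ω + Y i ω) ∂P = ∫ y, Ag y ∂ν := key g Mg hgm hMg
  -- pointwise (in y) application of the BL-dependence of X
  have hpt : ∀ y : (Fin d → ℤ) → ℝ, |(∫ x, f (x + y) * g (x + y) ∂μ) - Af y * Ag y| ≤ C := by
    intro y
    have hmap : ∀ (h : ((Fin d → ℤ) → ℝ) → ℝ), Measurable h → ∫ ω, h (XX ω + y) ∂P = ∫ x, h (x + y) ∂μ := by
      intro h hm
      have hm2 : Measurable fun x : (Fin d → ℤ) → ℝ => h (x + y) := by
        exact hm.comp (measurable_id.add_const y)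
      rw [hμ]
      exact (integral_map hXXm.aemeasurable hm2.aestronglyMeasurable).symm
    have := hBL I J hI hJ hIJ (fun x => f (x + y)) (fun x => g (x + y)) Lf Lg
      (hfm.comp (measurable_id.add_const y)) (hgm.comp (measurable_id.add_const y))
      ⟨Mf, fun x => hMf _⟩ ⟨Mg, fun x => hMg _⟩
      (fun x x' => by simpa using hfL (x + y) (x' + y))
      (fun x x' => by simpa using hgL (x + y) (x' + y))
    rw [hmap (fun x => f x * g x) (hfm.mul hgm), hmap f hfm, hmap g hgm] at this
    exact this
  have hC0 : 0 ≤ C := le_trans (abs_nonneg _) (hpt 0)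
  -- the conditional expectations are independent functions of Y
  have hIndAfg : ∫ y, Af y * Ag y ∂ν = (∫ y, Af y ∂ν) * ∫ y, Ag y ∂ν := by
    -- Af depends only on coordinates in I, Ag only on those in J
    classical
    set extI : ((i : I) → ℝ) → ((Fin d → ℤ) → ℝ) := fun u i => if h : i ∈ I then u ⟨i, h⟩ else 0 with hextI
    set extJ : ((j : J) → ℝ) → ((Fin d → ℤ) → ℝ) := fun u j => if h : j ∈ J then u ⟨j, h⟩ else 0 with hextJ
    have hextIm : Measurable extI := by
      apply measurable_pi_lambda
      intro i
      by_cases h : i ∈ I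
      · simpa [hextI, h] using measurable_pi_apply (⟨i, h⟩ : I)
      · simpa [hextI, h] using measurable_const
    have hextJm : Measurable extJ := by
      apply measurable_pi_lambda
      intro j
      by_cases h : j ∈ J
      · simpa [hextJ, h] using measurable_pi_apply (⟨j, h⟩ : J)
      · simpa [hextJ, h] using measurable_const
    have hAfI : ∀ y : (Fin d → ℤ) → ℝ, Af (extI fun i : I => y i) = Af y := by
      intro y
      have : ∀ x : (Fin d → ℤ) → ℝ, f (x + extI fun i : I => y i) = f (x + y) := by
        intro x
        have h0 := hfL (x + extI fun i : I => y i) (x + y)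
        have hsum : (∑ i ∈ I, |(x + extI fun i : I => y i) i - (x + y) i|) = 0 :=
          Finset.sum_eq_zero fun i hi => by simp [hextI, hi]
        rw [hsum, mul_zero] at h0
        exact sub_eq_zero.mp (abs_eq_zero.mp (le_antisymm h0 (abs_nonneg _)))
      simp only [hAf]
      exact integral_congr_ae (ae_of_all _ fun x => this x)
    have hAgJ : ∀ y : (Fin d → ℤ) → ℝ, Ag (extJ fun j : J => y j) = Ag y := by
      intro y
      have : ∀ x : (Fin d → ℤ) → ℝ, g (x + extJ fun j : J => y j) = g (x + y) := by
        intro x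
        have h0 := hgL (x + extJ fun j : J => y j) (x + y)
        have hsum : (∑ j ∈ J, |(x + extJ fun j : J => y j) j - (x + y) j|) = 0 :=
          Finset.sum_eq_zero fun j hj => by simp [hextJ, hj]
        rw [hsum, mul_zero] at h0
        exact sub_eq_zero.mp (abs_eq_zero.mp (le_antisymm h0 (abs_nonneg _)))
      simp only [hAg]
      exact integral_congr_ae (ae_of_all _ fun x => this x)
    have hindep : IndepFun (fun ω => Af (YY ω)) (fun ω => Ag (YY ω)) P := by
      have hbase := hYindep.indepFun_finset I J hIJ hYm
      have hcomp := hbase.comp (hAfm.measurable.comp hextIm) (hAgm.measurable.comp hextJm)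
      have e1 : (fun ω => (Af ∘ extI) fun i : I => Y i ω) = fun ω => Af (YY ω) := by
        funext ω; exact hAfI (YY ω)
      have e2 : (fun ω => (Ag ∘ extJ) fun j : J => Y j ω) = fun ω => Ag (YY ω) := by
        funext ω; exact hAgJ (YY ω)
      rwa [show ((Af ∘ extI) ∘ fun ω (i : I) => Y i ω) = fun ω => Af (YY ω) from e1,
        show ((Ag ∘ extJ) ∘ fun ω (j : J) => Y j ω) = fun ω => Ag (YY ω) from e2] at hcomp
    have hmul := hindep.integral_mul_eq_mul_integral
      ((hAfm.measurable.comp hYYm).aestronglyMeasurable)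
      ((hAgm.measurable.comp hYYm).aestronglyMeasurable)
    have r1 : ∫ y, Af y * Ag y ∂ν = ∫ ω, Af (YY ω) * Ag (YY ω) ∂P := by
      rw [hν]
      exact integral_map hYYm.aemeasurable
        (hAfm.measurable.mul hAgm.measurable).aestronglyMeasurable
    have r2 : ∫ y, Af y ∂ν = ∫ ω, Af (YY ω) ∂P := by
      rw [hν]
      exact integral_map hYYm.aemeasurable hAfm.aestronglyMeasurable
    have r3 : ∫ y, Ag y ∂ν = ∫ ω, Ag (YY ω) ∂P := by
      rw [hν]
      exact integral_map hYYm.aemeasurable hAgm.aestronglyMeasurable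
    rw [r1, r2, r3]
    simpa [Pi.mul_apply] using hmul
  -- assemble
  rw [E1, E2, E3]
  have hInner : Integrable (fun y => ∫ x, f (x + y) * g (x + y) ∂μ) ν := by
    refine hInt ν _ (Mf * Mg)
      ((hfpm.mul hgpm).stronglyMeasurable.integral_prod_left').aestronglyMeasurable ?_
    intro y
    have := norm_integral_le_of_norm_le_const (μ := μ)
      (f := fun x => f (x + y) * g (x + y)) (C := Mf * Mg)
      (ae_of_all _ fun x => by
        simp only [Real.norm_eq_abs, abs_mul]
        exact mul_le_mul (hMf _) (hMg _) (abs_nonneg _) hMf0)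
    simpa [Real.norm_eq_abs] using this
  have hProd : Integrable (fun y => Af y * Ag y) ν := by
    refine hInt ν _ (Mf * Mg) (hAfm.mul hAgm).aestronglyMeasurable ?_
    intro y
    rw [abs_mul]
    exact mul_le_mul (hAfb y) (hAgb y) (abs_nonneg _) hMf0
  have hsplit : (∫ y, ∫ x, f (x + y) * g (x + y) ∂μ ∂ν) - (∫ y, Af y ∂ν) * ∫ y, Ag y ∂ν
      = ∫ y, ((∫ x, f (x + y) * g (x + y) ∂μ) - Af y * Ag y) ∂ν := by
    rw [integral_sub hInner hProd, hIndAfg]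
  rw [hsplit]
  have := norm_integral_le_of_norm_le_const (μ := ν)
    (f := fun y => (∫ x, f (x + y) * g (x + y) ∂μ) - Af y * Ag y) (C := C)
    (ae_of_all _ fun y => by simpa [Real.norm_eq_abs] using hpt y)
  simpa [Real.norm_eq_abs] using this
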